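/- Let B be a Boolean algebra and let L ⊆ B be a sublattice with ⊥ ∈ L and ⊤ ∈ L (L closed under ⊓ and ⊔). Then the Boolean subalgebra of B generated by L equals the closure of L under symmetric difference; that is, every element of the Boolean subalgebra generated by L can be written as a finite symmetric difference a₁ Δ a₂ Δ ⋯ Δ aₙ of elements a₁, …, aₙ ∈ L, where a Δ b = (a ⊓ bᶜ) ⊔ (b ⊓ aᶜ). (Equivalently, viewing B as a Boolean ring with addition Δ and multiplication ⊓, the subring generated by L equals the additive subgroup generated by L, so the canonical ℤ₂-linear map from formal ℤ₂-sums of elements of L onto the Boolean subalgebra generated by L is surjective.) -/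

import Mathlib

open Set

open scoped symmDiff

/-- A subset of a Boolean algebra closed under `⊥`, `⊤`, complement, `⊓` and `⊔`,
i.e. a Boolean subalgebra. -/
def IsBoolSubalgebra {B : Type*} [BooleanAlgebra B] (T : Set B) : Prop :=
  ⊥ ∈ T ∧ ⊤ ∈ T ∧ (∀ a ∈ T, aᶜ ∈ T) ∧ (∀ a ∈ T, ∀ b ∈ T, a ⊓ b ∈ T) ∧
    ∀ a ∈ T, ∀ b ∈ T, a ⊔ b ∈ T

/-- The Boolean subalgebra of `B` generated by `L`: the intersection of all Boolean
subalgebras containing `L`. -/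
def boolGen {B : Type*} [BooleanAlgebra B] (L : Set B) : Set B :=
  ⋂₀ {T : Set B | IsBoolSubalgebra T ∧ L ⊆ T}

/-- If `L` is a bounded sublattice of a Boolean algebra `B`, then the Boolean subalgebra
generated by `L` is exactly the set of finite symmetric differences
`a₁ ∆ a₂ ∆ ⋯ ∆ aₙ` of elements of `L` (where `a ∆ b = (a ⊓ bᶜ) ⊔ (b ⊓ aᶜ)`); equivalently,
the canonical `ℤ₂`-linear map from formal sums of elements of `L` onto the generated
Boolean subalgebra is surjective. -/
theorem stmt17 {B : Type*} [BooleanAlgebra B] (L : Set B)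
    (hbot : ⊥ ∈ L) (htop : ⊤ ∈ L)
    (hinf : ∀ a ∈ L, ∀ b ∈ L, a ⊓ b ∈ L) (hsup : ∀ a ∈ L, ∀ b ∈ L, a ⊔ b ∈ L) :
    boolGen L = {x : B | ∃ l : List B, (∀ a ∈ l, a ∈ L) ∧ x = l.foldr (· ∆ ·) ⊥} := by
  set S : Set B := {x : B | ∃ l : List B, (∀ a ∈ l, a ∈ L) ∧ x = l.foldr (· ∆ ·) ⊥} with hSdef
  have haux : ∀ (l : List B) (y : B), l.foldr (· ∆ ·) y = (l.foldr (· ∆ ·) ⊥) ∆ y := by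
    intro l
    induction l with
    | nil => intro y; simp
    | cons a t ih => intro y; simp only [List.foldr_cons, ih y, symmDiff_assoc]
  have hbotS : (⊥ : B) ∈ S := ⟨[], by simp, by simp⟩
  have hLS : L ⊆ S := fun a ha => ⟨[a], by simp [ha], by simp⟩
  have hΔ : ∀ x ∈ S, ∀ y ∈ S, x ∆ y ∈ S := by
    rintro x ⟨l, hl, rfl⟩ y ⟨m, hm, rfl⟩
    refine ⟨l ++ m, ?_, ?_⟩
    · intro a ha; rcases List.mem_append.1 ha with h | h
      exacts [hl a h, hm a h]
    · rw [List.foldr_append]; exact (haux l _).symm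
  have hinfS1 : ∀ a ∈ L, ∀ x ∈ S, a ⊓ x ∈ S := by
    rintro a ha x ⟨l, hl, rfl⟩
    refine ⟨l.map (a ⊓ ·), ?_, ?_⟩
    · intro b hb
      rcases List.mem_map.1 hb with ⟨c, hc, rfl⟩
      exact hinf a ha c (hl c hc)
    · induction l with
      | nil => simp
      | cons b t ih =>
        simp only [List.foldr_cons, List.map_cons, inf_symmDiff_distrib_left]
        rw [ih (fun c hc => hl c (List.mem_cons_of_mem _ hc))]
  have hinfS : ∀ x ∈ S, ∀ y ∈ S, x ⊓ y ∈ S := by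
    rintro x ⟨l, hl, rfl⟩ y hy
    induction l with
    | nil => simpa using hbotS
    | cons a t ih =>
      simp only [List.foldr_cons, inf_symmDiff_distrib_right]
      exact hΔ _ (hinfS1 a (hl a (List.mem_cons_self)) _ hy)
        _ (ih (fun c hc => hl c (List.mem_cons_of_mem _ hc)))
  have htopS : (⊤ : B) ∈ S := hLS htop
  have hcomplS : ∀ x ∈ S, xᶜ ∈ S := by
    intro x hx
    have := hΔ x hx ⊤ htopS
    rwa [symmDiff_top'] at this
  have hsupS : ∀ x ∈ S, ∀ y ∈ S, x ⊔ y ∈ S := by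
    intro x hx y hy
    have h1 : (x ∆ y) ∆ (x ⊓ y) ∈ S := hΔ _ (hΔ x hx y hy) _ (hinfS x hx y hy)
    rwa [(disjoint_symmDiff_inf x y).symmDiff_eq_sup, symmDiff_sup_inf] at h1
  have hSalg : IsBoolSubalgebra S := ⟨hbotS, htopS, hcomplS, hinfS, hsupS⟩
  apply Set.Subset.antisymm
  · exact Set.sInter_subset_of_mem ⟨hSalg, hLS⟩
  · rintro x ⟨l, hl, rfl⟩
    intro T hT
    obtain ⟨⟨hTbot, hTtop, hTcompl, hTinf, hTsup⟩, hLT⟩ := hT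
    induction l with
    | nil => simpa using hTbot
    | cons a t ih =>
      have ha : a ∈ T := hLT (hl a (List.mem_cons_self))
      have ht : t.foldr (· ∆ ·) ⊥ ∈ T := ih (fun c hc => hl c (List.mem_cons_of_mem _ hc))
      simp only [List.foldr_cons]
      rw [symmDiff_eq]
      exact hTsup _ (hTinf a ha _ (hTcompl _ ht)) _ (hTinf _ ht _ (hTcompl a ha))
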